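/- Let p ∈ (0,1) and R > 0, set η = (1−p)·exp(2R), and assume η < 1. Define Ẽ(δ) = (1+δ)·D(δ/(1+δ) ‖ 1−p) − 2Rδ for δ ∈ (0,∞). Then Ẽ is convex on (0,∞), differentiable with derivative Ẽ′(δ) = log( (δ/(1+δ)) / η ), and attains its unique minimum over (0,∞) at δ* = η/(1−η). -/

import Mathlib

/-- The binary Kullback–Leibler divergence `D(q‖p)` (natural logarithms). -/
noncomputable def klBin (q p : ℝ) : ℝ :=
  q * Real.log (q / p) + (1 - q) * Real.log ((1 - q) / (1 - p))

noncomputable def Efun (p R : ℝ) : ℝ → ℝ :=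
  fun δ : ℝ => (1 + δ) * klBin (δ / (1 + δ)) (1 - p) - 2 * R * δ

lemma Efun_eq (p R : ℝ) (hp0 : 0 < p) (hp1 : p < 1) {δ : ℝ} (hδ : 0 < δ) :
    Efun p R δ = δ * Real.log δ - (1 + δ) * Real.log (1 + δ)
      - δ * Real.log (1 - p) - Real.log p - 2 * R * δ := by
  have h1 : (0:ℝ) < 1 + δ := by linarith
  have hq : 1 - δ / (1 + δ) = (1 + δ)⁻¹ := by field_simp; ring
  have hp' : (0:ℝ) < 1 - p := by linarith
  unfold Efun klBin
  rw [hq]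
  have l1 : Real.log (δ / (1 + δ) / (1 - p))
      = Real.log δ - Real.log (1 + δ) - Real.log (1 - p) := by
    rw [Real.log_div (by positivity) hp'.ne', Real.log_div hδ.ne' h1.ne']
  have l2 : Real.log ((1 + δ)⁻¹ / (1 - (1 - p)))
      = -Real.log (1 + δ) - Real.log p := by
    have : 1 - (1 - p) = p := by ring
    rw [this, Real.log_div (by positivity) hp0.ne', Real.log_inv]
  rw [l1, l2]
  field_simp
  ring

lemma Efun_hasDerivAt (p R η : ℝ) (hp0 : 0 < p) (hp1 : p < 1)
    (hη : η = (1 - p) * Real.exp (2 * R)) {δ : ℝ} (hδ : 0 < δ) :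
    HasDerivAt (Efun p R) (Real.log ((δ / (1 + δ)) / η)) δ := by
  have h1 : (0:ℝ) < 1 + δ := by linarith
  have hp' : (0:ℝ) < 1 - p := by linarith
  have hηpos : 0 < η := by rw [hη]; positivity
  have hg : HasDerivAt (fun x : ℝ => x * Real.log x - (1 + x) * Real.log (1 + x)
      - x * Real.log (1 - p) - Real.log p - 2 * R * x)
      (Real.log ((δ / (1 + δ)) / η)) δ := by
    have d1 : HasDerivAt (fun x : ℝ => x * Real.log x) (Real.log δ + 1) δ := by
      have := (hasDerivAt_id δ).mul (Real.hasDerivAt_log hδ.ne')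
      refine this.congr_deriv ?_
      simp [mul_inv_cancel₀ hδ.ne']
    have d2 : HasDerivAt (fun x : ℝ => (1 + x) * Real.log (1 + x))
        (Real.log (1 + δ) + 1) δ := by
      have hinner : HasDerivAt (fun x : ℝ => 1 + x) 1 δ :=
        (hasDerivAt_id δ).const_add 1
      have := hinner.mul (((Real.hasDerivAt_log h1.ne').comp δ hinner))
      refine this.congr_deriv ?_
      simp [mul_inv_cancel₀ h1.ne']
    have d3 : HasDerivAt (fun x : ℝ => x * Real.log (1 - p)) (Real.log (1 - p)) δ := by
      simpa using (hasDerivAt_id δ).mul_const (Real.log (1 - p))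
    have d5 : HasDerivAt (fun x : ℝ => 2 * R * x) (2 * R) δ := by
      simpa using (hasDerivAt_id δ).const_mul (2 * R)
    have dtot := (((d1.sub d2).sub d3).sub_const (Real.log p)).sub d5
    have hval : Real.log δ + 1 - (Real.log (1 + δ) + 1) - Real.log (1 - p) - 2 * R
        = Real.log ((δ / (1 + δ)) / η) := by
      rw [Real.log_div (by positivity) hηpos.ne', Real.log_div hδ.ne' h1.ne', hη,
        Real.log_mul hp'.ne' (Real.exp_ne_zero _), Real.log_exp]
      ring
    exact hval ▸ dtot
  refine hg.congr_of_eventuallyEq ?_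
  filter_upwards [isOpen_Ioi.mem_nhds (show δ ∈ Set.Ioi (0:ℝ) from hδ)] with x hx
  exact Efun_eq p R hp0 hp1 hx

theorem stmt9 (p R : ℝ) (hp0 : 0 < p) (hp1 : p < 1) (hR : 0 < R)
    (η : ℝ) (hη : η = (1 - p) * Real.exp (2 * R)) (hη1 : η < 1) :
    ConvexOn ℝ (Set.Ioi (0 : ℝ))
        (fun δ : ℝ => (1 + δ) * klBin (δ / (1 + δ)) (1 - p) - 2 * R * δ) ∧
    (∀ δ : ℝ, δ ∈ Set.Ioi (0 : ℝ) →
      HasDerivAt (fun δ : ℝ => (1 + δ) * klBin (δ / (1 + δ)) (1 - p) - 2 * R * δ)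
        (Real.log ((δ / (1 + δ)) / η)) δ) ∧
    (∀ δ : ℝ, δ ∈ Set.Ioi (0 : ℝ) → δ ≠ η / (1 - η) →
      (1 + η / (1 - η)) * klBin ((η / (1 - η)) / (1 + η / (1 - η))) (1 - p)
          - 2 * R * (η / (1 - η)) <
        (1 + δ) * klBin (δ / (1 + δ)) (1 - p) - 2 * R * δ) := by
  have hp' : (0:ℝ) < 1 - p := by linarith
  have hηpos : 0 < η := by rw [hη]; positivity
  have hη1' : (0:ℝ) < 1 - η := by linarith
  set f : ℝ → ℝ := Efun p R with hf
  have hfd : ∀ δ ∈ Set.Ioi (0:ℝ),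
      HasDerivAt f (Real.log ((δ / (1 + δ)) / η)) δ := fun δ hδ =>
    Efun_hasDerivAt p R η hp0 hp1 hη hδ
  have hderiv : ∀ δ ∈ Set.Ioi (0:ℝ), deriv f δ = Real.log ((δ / (1 + δ)) / η) :=
    fun δ hδ => (hfd δ hδ).deriv
  have hcont : ∀ s : Set ℝ, s ⊆ Set.Ioi (0:ℝ) → ContinuousOn f s := by
    intro s hs x hx
    exact ((hfd x (hs hx)).differentiableAt.continuousAt).continuousWithinAt
  -- convexity
  have hconv : ConvexOn ℝ (Set.Ioi (0:ℝ)) f := by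
    apply MonotoneOn.convexOn_of_deriv (convex_Ioi 0) (hcont _ le_rfl)
    · rw [interior_Ioi]
      intro x hx
      exact ((hfd x hx).differentiableAt).differentiableWithinAt
    rw [interior_Ioi]
    intro x hx y hy hxy
    rw [hderiv x hx, hderiv y hy]
    have hx0 : (0:ℝ) < x := hx
    have hy0 : (0:ℝ) < y := hy
    have h1x : (0:ℝ) < 1 + x := by linarith
    have h1y : (0:ℝ) < 1 + y := by linarith
    apply Real.log_le_log (by positivity)
    gcongr ?_ / η
    rw [div_le_div_iff₀ h1x h1y]
    nlinarith
  -- key: the minimizer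
  set d : ℝ := η / (1 - η) with hd
  have hd0 : 0 < d := by positivity
  have hdmem : d ∈ Set.Ioi (0:ℝ) := hd0
  -- derivative sign facts
  have hsign_neg : ∀ x : ℝ, 0 < x → x < d → Real.log ((x / (1 + x)) / η) < 0 := by
    intro x hx hxd
    have h1x : (0:ℝ) < 1 + x := by linarith
    apply Real.log_neg (by positivity)
    rw [div_lt_one hηpos, div_lt_iff₀ h1x]
    have : x * (1 - η) < η := by
      calc x * (1 - η) < d * (1 - η) := by nlinarith
        _ = η := div_mul_cancel₀ η hη1'.ne'
    nlinarith
  have hsign_pos : ∀ x : ℝ, d < x → 0 < Real.log ((x / (1 + x)) / η) := by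
    intro x hxd
    have hx : 0 < x := hd0.trans hxd
    have h1x : (0:ℝ) < 1 + x := by linarith
    apply Real.log_pos
    rw [lt_div_iff₀ hηpos, one_mul, lt_div_iff₀ h1x]
    have : η < x * (1 - η) := by
      calc η = d * (1 - η) := (div_mul_cancel₀ η hη1'.ne').symm
        _ < x * (1 - η) := by nlinarith
    nlinarith
  refine ⟨hconv, hfd, ?_⟩
  intro δ hδ hne
  have hδ0 : (0:ℝ) < δ := hδ
  rcases lt_or_gt_of_ne hne with hlt | hgt
  · -- δ < d : f strictly antitone on [δ, d]
    have hanti : StrictAntiOn f (Set.Icc δ d) := by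
      apply strictAntiOn_of_deriv_neg (convex_Icc δ d)
        (hcont _ (fun x hx => lt_of_lt_of_le hδ0 hx.1))
      intro x hx
      rw [interior_Icc] at hx
      rw [hderiv x (hδ0.trans hx.1)]
      exact hsign_neg x (hδ0.trans hx.1) hx.2
    exact hanti ⟨le_rfl, hlt.le⟩ ⟨hlt.le, le_rfl⟩ hlt
  · -- d < δ : f strictly monotone on [d, δ]
    have hmono : StrictMonoOn f (Set.Icc d δ) := by
      apply strictMonoOn_of_deriv_pos (convex_Icc d δ)
        (hcont _ (fun x hx => lt_of_lt_of_le hd0 hx.1))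
      intro x hx
      rw [interior_Icc] at hx
      rw [hderiv x (hd0.trans hx.1)]
      exact hsign_pos x hx.1
    exact hmono ⟨le_rfl, hgt.le⟩ ⟨hgt.le, le_rfl⟩ hgt
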